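/- arXiv:2102.08090 — 4 statements merged into one kernel-verified Lean document; each statement's English description precedes it below -/
import Mathlib

section
/- Let ℍ be a Hilbert space and let J, K be bounded linear operators on ℍ. Then [J, K] = JK − KJ ≠ Id. (Equivalently: there are no bounded operators J, K on a Hilbert space with JK − KJ = Id.) -/
theorem commutator_ne_id (H : Type*) [NormedAddCommGroup H] [InnerProductSpace ℂ H]
    [CompleteSpace H] [Nontrivial H] (J K : H →L[ℂ] H) :
    J * K - K * J ≠ 1 := by
  intro h
  -- key identity: J * K^(n+1) - K^(n+1) * J = (n+1) • K^n
  have key : ∀ n : ℕ, J * K ^ (n + 1) - K ^ (n + 1) * J = (((n : ℂ)) + 1) • K ^ n := by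
    intro n
    induction n with
    | zero => simpa using h
    | succ n ih =>
      have e : J * K ^ (n + 1 + 1) - K ^ (n + 1 + 1) * J
          = (J * K ^ (n + 1) - K ^ (n + 1) * J) * K + K ^ (n + 1) * (J * K - K * J) := by
        noncomm_ring
      rw [e, ih, h, smul_mul_assoc, ← pow_succ, mul_one]
      push_cast
      match_scalars <;> ring
  -- K^n ≠ 0 for all n
  have kn : ∀ n : ℕ, K ^ n ≠ 0 := by
    intro n
    induction n with
    | zero => simp
    | succ n ih =>
      intro h0
      have hk := key n
      rw [h0] at hk
      simp only [mul_zero, zero_mul, sub_zero, zero_sub] at hk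
      have h2 : ((n : ℂ) + 1) • K ^ n = 0 := by rw [← hk]
      rcases smul_eq_zero.mp h2 with h3 | h3
      · exact Nat.cast_add_one_ne_zero n h3
      · exact ih h3
  -- norm estimate
  have bound : ∀ n : ℕ, ((n : ℝ) + 1) * ‖K ^ n‖ ≤ 2 * ‖J‖ * ‖K‖ * ‖K ^ n‖ := by
    intro n
    have h1 : ‖((n : ℂ) + 1) • K ^ n‖ = ((n : ℝ) + 1) * ‖K ^ n‖ := by
      rw [norm_smul]
      congr 1
      simpa using Complex.norm_natCast (n + 1)
    calc ((n : ℝ) + 1) * ‖K ^ n‖ = ‖J * K ^ (n + 1) - K ^ (n + 1) * J‖ := by rw [key n, h1]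
      _ ≤ ‖J * K ^ (n + 1)‖ + ‖K ^ (n + 1) * J‖ := norm_sub_le _ _
      _ ≤ ‖J‖ * ‖K ^ (n + 1)‖ + ‖K ^ (n + 1)‖ * ‖J‖ := by
          gcongr <;> exact norm_mul_le _ _
      _ = 2 * ‖J‖ * ‖K ^ (n + 1)‖ := by ring
      _ ≤ 2 * ‖J‖ * (‖K‖ * ‖K ^ n‖) := by
          have : ‖K ^ (n + 1)‖ ≤ ‖K‖ * ‖K ^ n‖ := by
            rw [pow_succ]
            exact (norm_mul_le _ _).trans (le_of_eq (mul_comm _ _))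
          have hJ : (0 : ℝ) ≤ 2 * ‖J‖ := by positivity
          nlinarith [norm_nonneg (K ^ (n + 1))]
      _ = 2 * ‖J‖ * ‖K‖ * ‖K ^ n‖ := by ring
  obtain ⟨n, hn⟩ := exists_nat_gt (2 * ‖J‖ * ‖K‖)
  have hpos : 0 < ‖K ^ n‖ := norm_pos_iff.mpr (kn n)
  have := bound n
  nlinarith [hpos, hn]
end

section
/- For each k ∈ ℕ, the polynomial P_k defined by P_k(a) = (−1)^k ∫_0^∞ e^{−t} L_k(2t + 2a) dt satisfies P_k(a) = 2·Σ_{l=0}^{k−1} (−1)^l L_l(2a) + (−1)^k L_k(2a) and P_k′(a) = 2·Σ_{l=0}^{k−1} (−1)^l L_l(2a), where L_l denotes the classical Laguerre polynomial. -/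
open MeasureTheory Real

/-- The classical Laguerre polynomial `L_k(x) = ∑_{l=0}^{k} ((-1)^l / l!) C(k,l) x^l`. -/
noncomputable def laguerre (k : ℕ) (x : ℝ) : ℝ :=
  ∑ l ∈ Finset.range (k + 1), ((-1 : ℝ) ^ l / l.factorial) * (k.choose l) * x ^ l

/-- `P_k(a) = (-1)^k ∫_0^∞ e^{-t} L_k(2t + 2a) dt`. -/
noncomputable def laguerreP (k : ℕ) (a : ℝ) : ℝ :=
  (-1 : ℝ) ^ k * ∫ t in Set.Ioi (0 : ℝ), Real.exp (-t) * laguerre k (2 * t + 2 * a)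

open Filter Asymptotics

lemma sum_laguerre (k : ℕ) (x : ℝ) :
    ∑ m ∈ Finset.range k, laguerre m x
      = ∑ j ∈ Finset.range k, ((-1 : ℝ) ^ j / j.factorial) * (k.choose (j + 1)) * x ^ j := by
  induction k with
  | zero => simp
  | succ k ih =>
    rw [Finset.sum_range_succ, ih, laguerre]
    have h : ∀ j ∈ Finset.range (k + 1),
        ((-1 : ℝ) ^ j / j.factorial) * ((k+1).choose (j + 1)) * x ^ j
          = ((-1 : ℝ) ^ j / j.factorial) * (k.choose (j + 1)) * x ^ j
            + ((-1 : ℝ) ^ j / j.factorial) * (k.choose j) * x ^ j := by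
      intro j _
      rw [Nat.choose_succ_succ']
      push_cast
      ring
    rw [Finset.sum_congr rfl h, Finset.sum_add_distrib]
    congr 1
    rw [Finset.sum_range_succ, Nat.choose_succ_self]
    simp

lemma hasDerivAt_laguerre (k : ℕ) (x : ℝ) :
    HasDerivAt (laguerre k) (-(∑ l ∈ Finset.range k, laguerre l x)) x := by
  have h : HasDerivAt (laguerre k)
      (∑ l ∈ Finset.range (k + 1),
        ((-1 : ℝ) ^ l / l.factorial) * (k.choose l) * (l * x ^ (l - 1))) x := by
    unfold laguerre
    exact HasDerivAt.fun_sum fun l _ => (hasDerivAt_pow l x).const_mul _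
  convert h using 1
  rw [sum_laguerre, Finset.sum_range_succ', ← Finset.sum_neg_distrib]
  simp only [Nat.cast_zero, pow_zero, mul_zero, zero_mul, add_zero]
  refine (Finset.sum_congr rfl fun j _ => ?_).symm
  have hfac : ((j + 1).factorial : ℝ) = (j + 1) * j.factorial := by
    rw [Nat.factorial_succ]; push_cast; ring
  rw [hfac]
  have h1 : ((j:ℝ) + 1) ≠ 0 := by positivity
  have h2 : (j.factorial : ℝ) ≠ 0 := Nat.cast_ne_zero.2 j.factorial_ne_zero
  push_cast
  field_simp
  ring

lemma exists_poly (k : ℕ) (a : ℝ) :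
    ∃ p : Polynomial ℝ, ∀ t, laguerre k (2 * t + 2 * a) = p.eval t := by
  refine ⟨∑ l ∈ Finset.range (k + 1),
    Polynomial.C (((-1 : ℝ) ^ l / l.factorial) * (k.choose l)) *
      (Polynomial.C 2 * Polynomial.X + Polynomial.C (2 * a)) ^ l, fun t => ?_⟩
  rw [laguerre, Polynomial.eval_finset_sum]
  refine Finset.sum_congr rfl fun l _ => ?_
  simp [mul_assoc]

lemma poly_tendsto (p : Polynomial ℝ) :
    Tendsto (fun t => Real.exp (-t) * p.eval t) atTop (nhds 0) := by
  have := p.tendsto_div_exp_atTop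
  refine this.congr fun t => ?_
  rw [Real.exp_neg, div_eq_inv_mul]

lemma poly_integrable (p : Polynomial ℝ) :
    IntegrableOn (fun t => Real.exp (-t) * p.eval t) (Set.Ioi (0:ℝ)) := by
  apply integrable_of_isBigO_exp_neg (b := 1/2) (by norm_num)
  · exact ((Real.continuous_exp.comp continuous_neg).mul p.continuous_aeval).continuousOn
  · apply IsLittleO.isBigO
    apply Asymptotics.isLittleO_of_tendsto'
    · filter_upwards with t h
      exact absurd h (Real.exp_ne_zero _)
    · set q : Polynomial ℝ := p.comp (Polynomial.C 2 * Polynomial.X)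
      have hq : Tendsto (fun s => q.eval s / Real.exp s) atTop (nhds 0) :=
        q.tendsto_div_exp_atTop
      have h2 : Tendsto (fun t : ℝ => t / 2) atTop atTop :=
        tendsto_id.atTop_div_const two_pos
      refine (hq.comp h2).congr fun t => ?_
      simp only [Function.comp, q, Polynomial.eval_comp, Polynomial.eval_mul,
        Polynomial.eval_C, Polynomial.eval_X]
      rw [show (2 : ℝ) * (t / 2) = t by ring]
      rw [show -(1/2:ℝ)*t = -(t/2) by ring, Real.exp_neg,
        show t = t/2 + t/2 by ring, Real.exp_add]
      have := Real.exp_ne_zero (t/2)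
      field_simp
      rw [sq, ← Real.exp_add, mul_assoc, ← Real.exp_add]
      congr 2
      ring

lemma laguerre_integrable (k : ℕ) (a : ℝ) :
    IntegrableOn (fun t => Real.exp (-t) * laguerre k (2 * t + 2 * a)) (Set.Ioi (0:ℝ)) := by
  obtain ⟨p, hp⟩ := exists_poly k a
  simp only [hp]
  exact poly_integrable p

lemma laguerre_tendsto (k : ℕ) (a : ℝ) :
    Tendsto (fun t => -(Real.exp (-t) * laguerre k (2 * t + 2 * a))) atTop (nhds 0) := by
  obtain ⟨p, hp⟩ := exists_poly k a
  simp only [hp]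
  simpa using (poly_tendsto p).neg

lemma key (k : ℕ) (a : ℝ) :
    (∫ t in Set.Ioi (0:ℝ), Real.exp (-t) * laguerre k (2 * t + 2 * a))
      = laguerre k (2 * a)
        - 2 * ∑ l ∈ Finset.range k, ∫ t in Set.Ioi (0:ℝ),
            Real.exp (-t) * laguerre l (2 * t + 2 * a) := by
  set F : ℝ → ℝ := fun t => -(Real.exp (-t) * laguerre k (2 * t + 2 * a)) with hF
  set F' : ℝ → ℝ := fun t => Real.exp (-t) * laguerre k (2 * t + 2 * a)
      + 2 * ∑ l ∈ Finset.range k, Real.exp (-t) * laguerre l (2 * t + 2 * a) with hF'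
  have hderiv : ∀ t ∈ Set.Ici (0:ℝ), HasDerivAt F (F' t) t := by
    intro t _
    have h1 : HasDerivAt (fun t : ℝ => 2 * t + 2 * a) 2 t := by
      simpa using ((hasDerivAt_id t).const_mul 2).add_const (2 * a)
    have h2 : HasDerivAt (fun t : ℝ => laguerre k (2 * t + 2 * a))
        (-(∑ l ∈ Finset.range k, laguerre l (2 * t + 2 * a)) * 2) t :=
      (hasDerivAt_laguerre k _).comp t h1
    have h3 : HasDerivAt (fun t : ℝ => Real.exp (-t)) (-Real.exp (-t)) t := by
      simpa using (hasDerivAt_neg t).exp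
    have h4 := (h3.mul h2).neg
    convert h4 using 1
    show Real.exp (-t) * laguerre k (2 * t + 2 * a)
      + 2 * ∑ l ∈ Finset.range k, Real.exp (-t) * laguerre l (2 * t + 2 * a) = _
    rw [← Finset.mul_sum]
    ring
    all_goals rfl
  have hint : IntegrableOn F' (Set.Ioi (0:ℝ)) := by
    apply (laguerre_integrable k a).add
    apply Integrable.const_mul
    exact integrable_finset_sum _ fun l _ => laguerre_integrable l a
  have htend : Tendsto F atTop (nhds 0) := laguerre_tendsto k a
  have hibp := integral_Ioi_of_hasDerivAt_of_tendsto' hderiv hint htend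
  have hsplit : (∫ t in Set.Ioi (0:ℝ), F' t)
      = (∫ t in Set.Ioi (0:ℝ), Real.exp (-t) * laguerre k (2 * t + 2 * a))
        + 2 * ∑ l ∈ Finset.range k, ∫ t in Set.Ioi (0:ℝ),
            Real.exp (-t) * laguerre l (2 * t + 2 * a) := by
    rw [hF']
    rw [integral_add (laguerre_integrable k a)
      (Integrable.const_mul (integrable_finset_sum _ fun l _ => laguerre_integrable l a) 2)]
    rw [integral_const_mul, integral_finset_sum _ fun l _ => laguerre_integrable l a]
  rw [hsplit] at hibp
  have hF0 : F 0 = -laguerre k (2 * a) := by simp [hF]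
  rw [hF0] at hibp
  linarith [hibp]

lemma sumR (k : ℕ) (L : ℕ → ℝ) :
    ∑ l ∈ Finset.range k, (-1:ℝ)^l *
        (2 * (∑ m ∈ Finset.range l, (-1:ℝ)^m * L m) + (-1:ℝ)^l * L l)
      = (-1:ℝ)^(k+1) * ∑ l ∈ Finset.range k, (-1:ℝ)^l * L l := by
  induction k with
  | zero => simp
  | succ k ih =>
    rw [Finset.sum_range_succ, ih, Finset.sum_range_succ]
    rw [pow_succ, pow_succ, pow_succ]
    ring

lemma part1 (k : ℕ) (a : ℝ) :
    laguerreP k a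
      = 2 * (∑ l ∈ Finset.range k, (-1 : ℝ) ^ l * laguerre l (2 * a))
        + (-1 : ℝ) ^ k * laguerre k (2 * a) := by
  induction k using Nat.strong_induction_on with
  | _ k ih =>
    have hI : ∀ l ∈ Finset.range k,
        (∫ t in Set.Ioi (0:ℝ), Real.exp (-t) * laguerre l (2 * t + 2 * a))
          = (-1:ℝ)^l * (2 * (∑ m ∈ Finset.range l, (-1:ℝ)^m * laguerre m (2 * a))
              + (-1:ℝ)^l * laguerre l (2 * a)) := by
      intro l hl
      have h := ih l (Finset.mem_range.mp hl)
      rw [laguerreP] at h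
      have hsq : ((-1:ℝ)^l) * ((-1:ℝ)^l) = 1 := by rw [← mul_pow]; norm_num
      rw [← h, ← mul_assoc, hsq, one_mul]
    rw [laguerreP, key, Finset.sum_congr rfl hI, sumR]
    set S := ∑ l ∈ Finset.range k, (-1:ℝ)^l * laguerre l (2 * a)
    have hsq : ((-1:ℝ)^k) * ((-1:ℝ)^k) = 1 := by rw [← mul_pow]; norm_num
    rw [pow_succ]
    linear_combination 2 * S * hsq

lemma identity (k : ℕ) (L : ℕ → ℝ) :
    2 * ∑ l ∈ Finset.range k, (-1:ℝ)^l * (-(∑ m ∈ Finset.range l, L m) * 2)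
        + (-1:ℝ)^k * (-(∑ m ∈ Finset.range k, L m) * 2)
      = 2 * ∑ l ∈ Finset.range k, (-1:ℝ)^l * L l := by
  induction k with
  | zero => simp
  | succ k ih =>
    rw [Finset.sum_range_succ, Finset.sum_range_succ, Finset.sum_range_succ, pow_succ]
    have := ih
    nlinarith [ih, sq_nonneg ((-1:ℝ)^k)]

theorem laguerreP_eq_and_deriv (k : ℕ) (a : ℝ) :
    laguerreP k a
      = 2 * (∑ l ∈ Finset.range k, (-1 : ℝ) ^ l * laguerre l (2 * a))
        + (-1 : ℝ) ^ k * laguerre k (2 * a) ∧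
    deriv (laguerreP k) a
      = 2 * (∑ l ∈ Finset.range k, (-1 : ℝ) ^ l * laguerre l (2 * a)) := by
  refine ⟨part1 k a, ?_⟩
  have hfun : laguerreP k = fun a =>
      2 * (∑ l ∈ Finset.range k, (-1 : ℝ) ^ l * laguerre l (2 * a))
        + (-1 : ℝ) ^ k * laguerre k (2 * a) := funext fun a => part1 k a
  rw [hfun]
  have hl : ∀ l, HasDerivAt (fun a : ℝ => laguerre l (2 * a))
      (-(∑ m ∈ Finset.range l, laguerre m (2 * a)) * 2) a := by
    intro l
    exact (hasDerivAt_laguerre l _).comp a (by simpa using (hasDerivAt_id a).const_mul 2)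
  have hsum : HasDerivAt (fun a : ℝ => ∑ l ∈ Finset.range k, (-1:ℝ)^l * laguerre l (2 * a))
      (∑ l ∈ Finset.range k, (-1:ℝ)^l * (-(∑ m ∈ Finset.range l, laguerre m (2 * a)) * 2)) a :=
    HasDerivAt.fun_sum fun l _ => (hl l).const_mul _
  have hD := (hsum.const_mul 2).add ((hl k).const_mul ((-1:ℝ)^k))
  exact hD.deriv.trans (identity k (fun m => laguerre m (2 * a)))
end

section
/- The modified Hardy operator with kernel H(x−y)·H(x)·H(y)/(π(x+y)) is bounded on L²(ℝ) with operator norm at most 1/2. Equivalently, for all u,v ∈ L²(ℝ): |∬_{0≤y≤x} u(y)·conj(v(x))/(π(x+y)) dy dx| ≤ (1/2)·‖u‖_{L²}·‖v‖_{L²}. -/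
open MeasureTheory Real Set Filter
open scoped ENNReal

lemma arctan_deriv {c : ℝ} (hc : 0 < c) {x : ℝ} (hx : 0 < x) :
    HasDerivAt (fun t => (2 / π) * arctan (Real.sqrt t / Real.sqrt c))
      (Real.sqrt c / (π * Real.sqrt x * (x + c))) x := by
  have h1 : HasDerivAt (fun t => Real.sqrt t / Real.sqrt c)
      ((1 / (2 * Real.sqrt x)) / Real.sqrt c) x :=
    (Real.hasDerivAt_sqrt hx.ne').div_const _
  have h2 := (Real.hasDerivAt_arctan (Real.sqrt x / Real.sqrt c)).comp x h1
  have h3 := h2.const_mul (2 / π)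
  refine h3.congr_deriv ?_
  symm
  have hsx : Real.sqrt x ^ 2 = x := Real.sq_sqrt hx.le
  have hsc : Real.sqrt c ^ 2 = c := Real.sq_sqrt hc.le
  have hsx0 : (0:ℝ) < Real.sqrt x := Real.sqrt_pos.2 hx
  have hsc0 : (0:ℝ) < Real.sqrt c := Real.sqrt_pos.2 hc
  have hpi : (0:ℝ) < π := Real.pi_pos
  rw [div_pow, hsx, hsc]
  have h4 : 1 + x / c = (x + c) / c := by field_simp; ring
  rw [h4]
  rw [← hsc]
  field_simp
  rw [Real.sqrt_sq hsc0.le]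


lemma sqrt_tendsto_atTop : Filter.Tendsto Real.sqrt Filter.atTop Filter.atTop := by
  refine (tendsto_rpow_atTop (by norm_num : (0:ℝ) < 1/2)).congr' ?_
  filter_upwards [Filter.eventually_ge_atTop (0:ℝ)] with t ht
  exact (Real.sqrt_eq_rpow t).symm

lemma tendsto_g {c : ℝ} (hc : 0 < c) :
    Filter.Tendsto (fun t => (2 / π) * arctan (Real.sqrt t / Real.sqrt c)) Filter.atTop (nhds 1) := by
  have h1 : Filter.Tendsto (fun t => Real.sqrt t / Real.sqrt c) Filter.atTop Filter.atTop :=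
    sqrt_tendsto_atTop.atTop_div_const (Real.sqrt_pos.2 hc)
  have h2 := Real.tendsto_arctan_atTop.comp h1
  have h3 : Filter.Tendsto (fun t => arctan (Real.sqrt t / Real.sqrt c)) Filter.atTop (nhds (π/2)) :=
    tendsto_nhds_of_tendsto_nhdsWithin h2
  have h4 := h3.const_mul (2 / π)
  convert h4 using 2
  have := Real.pi_ne_zero
  field_simp

lemma integral_Ioi_eq {c : ℝ} (hc : 0 < c) :
    ∫ t in Set.Ioi c, Real.sqrt c / (π * Real.sqrt t * (t + c)) = 1 / 2 := by
  have hderiv : ∀ t ∈ Set.Ioi c, HasDerivAt (fun t => (2 / π) * arctan (Real.sqrt t / Real.sqrt c))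
      (Real.sqrt c / (π * Real.sqrt t * (t + c))) t := fun t ht => arctan_deriv hc (hc.trans ht)
  have hcont : ContinuousWithinAt (fun t => (2 / π) * arctan (Real.sqrt t / Real.sqrt c))
      (Set.Ici c) c :=
    ((continuous_const.mul (Real.continuous_arctan.comp ((Real.continuous_sqrt).div_const _))).continuousWithinAt)
  have hnn : ∀ t ∈ Set.Ioi c, 0 ≤ Real.sqrt c / (π * Real.sqrt t * (t + c)) := by
    intro t ht
    have h1 : (0:ℝ) < t := hc.trans ht
    have h2 : (0:ℝ) < t + c := by linarith
    positivity
  rw [integral_Ioi_of_hasDerivAt_of_nonneg hcont hderiv hnn (tendsto_g hc)]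
  rw [div_self (Real.sqrt_pos.2 hc).ne', Real.arctan_one]
  have := Real.pi_ne_zero
  field_simp
  ring

lemma measurable_integrand {c : ℝ} :
    Measurable (fun t => Real.sqrt c / (π * Real.sqrt t * (t + c))) := by
  apply Measurable.div measurable_const
  exact ((measurable_const.mul Real.continuous_sqrt.measurable).mul
    (measurable_id.add measurable_const))

lemma intervalIntegrable_integrand {c : ℝ} (hc : 0 < c) :
    IntervalIntegrable (fun t => Real.sqrt c / (π * Real.sqrt t * (t + c))) volume 0 c := by
  have hbase : IntervalIntegrable (fun t : ℝ => Real.sqrt c / (π * c) * t ^ (-(1/2) : ℝ))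
      volume 0 c := (intervalIntegral.intervalIntegrable_rpow' (by norm_num)).const_mul _
  refine hbase.mono_fun measurable_integrand.aestronglyMeasurable ?_
  rw [Set.uIoc_of_le hc.le]
  filter_upwards [ae_restrict_mem measurableSet_Ioc] with t ht
  obtain ⟨ht0, htc⟩ := ht
  have hst : (0:ℝ) < Real.sqrt t := Real.sqrt_pos.2 ht0
  have hrpow : t ^ (-(1/2) : ℝ) = (Real.sqrt t)⁻¹ := by
    rw [Real.sqrt_eq_rpow, ← Real.rpow_neg_one, ← Real.rpow_mul ht0.le]
    norm_num
  rw [Real.norm_eq_abs, Real.norm_eq_abs, hrpow]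
  have h1 : (0:ℝ) < t + c := by linarith
  rw [abs_of_nonneg (by positivity), abs_of_nonneg (by positivity)]
  rw [div_le_iff₀ (by positivity)]
  have h2 : Real.sqrt c / (π * c) * (Real.sqrt t)⁻¹ * (π * Real.sqrt t * (t + c))
      = Real.sqrt c * ((t + c) / c) := by
    field_simp
  rw [h2]
  have h3 : (1:ℝ) ≤ (t + c) / c := by rw [le_div_iff₀ hc]; linarith
  exact le_mul_of_one_le_right (Real.sqrt_nonneg c) h3

lemma integral_Ioc_eq {c : ℝ} (hc : 0 < c) :
    ∫ t in Set.Ioc 0 c, Real.sqrt c / (π * Real.sqrt t * (t + c)) = 1 / 2 := by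
  rw [← intervalIntegral.integral_of_le hc.le]
  have hcont : ContinuousOn (fun t => (2 / π) * arctan (Real.sqrt t / Real.sqrt c))
      (Set.Icc 0 c) :=
    ((continuous_const.mul (Real.continuous_arctan.comp
      ((Real.continuous_sqrt).div_const _))).continuousOn)
  have hderiv : ∀ t ∈ Set.Ioo 0 c, HasDerivWithinAt
      (fun t => (2 / π) * arctan (Real.sqrt t / Real.sqrt c))
      (Real.sqrt c / (π * Real.sqrt t * (t + c))) (Set.Ioi t) t :=
    fun t ht => (arctan_deriv hc ht.1).hasDerivWithinAt
  rw [intervalIntegral.integral_eq_sub_of_hasDeriv_right_of_le hc.le hcont hderiv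
    (intervalIntegrable_integrand hc)]
  rw [div_self (Real.sqrt_pos.2 hc).ne', Real.arctan_one, Real.sqrt_zero]
  rw [zero_div, Real.arctan_zero]
  have := Real.pi_ne_zero
  field_simp
  ring

lemma integrableOn_Ioi_integrand {c : ℝ} (hc : 0 < c) :
    IntegrableOn (fun t => Real.sqrt c / (π * Real.sqrt t * (t + c))) (Set.Ioi c) volume := by
  refine integrableOn_Ioi_deriv_of_nonneg
    ((continuous_const.mul (Real.continuous_arctan.comp
      ((Real.continuous_sqrt).div_const _))).continuousWithinAt)
    (fun t ht => arctan_deriv hc (hc.trans ht)) ?_ (tendsto_g hc)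
  intro t ht
  have h1 : (0:ℝ) < t := hc.trans ht
  have h2 : (0:ℝ) < t + c := by linarith
  positivity

lemma lint_Ioc {c : ℝ} (hc : 0 < c) :
    ∫⁻ t in Set.Ioc 0 c, ENNReal.ofReal (Real.sqrt c / (π * Real.sqrt t * (t + c)))
      = ENNReal.ofReal (1/2) := by
  rw [← ofReal_integral_eq_lintegral_ofReal (intervalIntegrable_integrand hc).1]
  · rw [integral_Ioc_eq hc]
  · filter_upwards [ae_restrict_mem measurableSet_Ioc] with t ht
    have h1 : (0:ℝ) < t := ht.1
    have h2 : (0:ℝ) < t + c := by linarith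
    positivity

lemma lint_Ioi {c : ℝ} (hc : 0 < c) :
    ∫⁻ t in Set.Ioi c, ENNReal.ofReal (Real.sqrt c / (π * Real.sqrt t * (t + c)))
      = ENNReal.ofReal (1/2) := by
  rw [← ofReal_integral_eq_lintegral_ofReal (integrableOn_Ioi_integrand hc)]
  · rw [integral_Ioi_eq hc]
  · filter_upwards [ae_restrict_mem measurableSet_Ioi] with t ht
    have h1 : (0:ℝ) < t := hc.trans ht
    have h2 : (0:ℝ) < t + c := by linarith
    positivity

lemma ennreal_amgm (a b : ℝ≥0∞) : a * b ≤ (a ^ 2 + b ^ 2) / 2 := by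
  rcases eq_or_ne a 0 with rfl | ha0
  · simp
  rcases eq_or_ne b 0 with rfl | hb0
  · simp
  rcases eq_or_ne a ⊤ with rfl | hat
  · have : ((⊤:ℝ≥0∞) ^ 2 + b ^ 2) / 2 = ⊤ := by
      rw [ENNReal.top_pow (by norm_num), top_add, ENNReal.top_div_of_ne_top (by norm_num)]
    rw [this]; exact le_top
  rcases eq_or_ne b ⊤ with rfl | hbt
  · have : (a ^ 2 + (⊤:ℝ≥0∞) ^ 2) / 2 = ⊤ := by
      rw [ENNReal.top_pow (by norm_num), add_top, ENNReal.top_div_of_ne_top (by norm_num)]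
    rw [this]; exact le_top
  have h : a.toReal * b.toReal ≤ (a.toReal ^ 2 + b.toReal ^ 2) / 2 := by nlinarith [sq_nonneg (a.toReal - b.toReal)]
  rw [← ENNReal.ofReal_toReal hat, ← ENNReal.ofReal_toReal hbt,
    ← ENNReal.ofReal_mul a.toReal_nonneg, ← ENNReal.ofReal_pow a.toReal_nonneg,
    ← ENNReal.ofReal_pow b.toReal_nonneg,
    ← ENNReal.ofReal_add (by positivity) (by positivity)]
  calc ENNReal.ofReal (a.toReal * b.toReal)
      ≤ ENNReal.ofReal ((a.toReal ^ 2 + b.toReal ^ 2) / 2) := ENNReal.ofReal_le_ofReal h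
    _ = ENNReal.ofReal (a.toReal ^ 2 + b.toReal ^ 2) / 2 := by
        rw [ENNReal.ofReal_div_of_pos (by norm_num)]
        norm_num

lemma ennreal_amgm' {t : ℝ≥0∞} (ht0 : t ≠ 0) (htop : t ≠ ⊤) (a b : ℝ≥0∞) :
    a * b ≤ (t * a ^ 2 + t⁻¹ * b ^ 2) / 2 := by
  have h := ennreal_amgm (t * a) b
  have h2 : a * b = t⁻¹ * (t * a * b) := by
    rw [← mul_assoc, ← mul_assoc, ENNReal.inv_mul_cancel ht0 htop, one_mul]
  rw [h2]
  calc t⁻¹ * (t * a * b) ≤ t⁻¹ * (((t * a) ^ 2 + b ^ 2) / 2) := by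
        exact mul_le_mul_right h _
    _ = (t * a ^ 2 + t⁻¹ * b ^ 2) / 2 := by
        rw [← mul_div_assoc]
        congr 1
        rw [mul_pow, mul_add, ← mul_assoc]
        congr 1
        rw [pow_two, ← mul_assoc, ENNReal.inv_mul_cancel ht0 htop, one_mul]

noncomputable def Kf (p : ℝ × ℝ) : ℝ≥0∞ :=
  if 0 ≤ p.2 ∧ p.2 ≤ p.1 then ENNReal.ofReal (1 / (π * (p.1 + p.2))) else 0

lemma Kf_meas : Measurable Kf := by
  have hs : MeasurableSet {p : ℝ × ℝ | 0 ≤ p.2 ∧ p.2 ≤ p.1} :=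
    (measurableSet_le measurable_const measurable_snd).inter
      (measurableSet_le measurable_snd measurable_fst)
  exact Measurable.ite hs
    (ENNReal.measurable_ofReal.comp
      (measurable_const.div (measurable_const.mul (measurable_fst.add measurable_snd))))
    measurable_const

lemma half_eq : ENNReal.ofReal (1 / 2) = 2⁻¹ := by
  rw [ENNReal.ofReal_div_of_pos (by norm_num)]
  simp [ENNReal.ofReal_ofNat]

lemma inner_x_le {y : ℝ} (hy : y ≠ 0) :
    ∫⁻ x, Kf (x, y) * ENNReal.ofReal (Real.sqrt y / Real.sqrt x) ≤ 2⁻¹ := by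
  rcases lt_or_gt_of_ne hy with hneg | hpos
  · have : ∀ x : ℝ, Kf (x, y) * ENNReal.ofReal (Real.sqrt y / Real.sqrt x) = 0 := by
      intro x
      rw [Kf, if_neg (by push_neg; intro h; linarith)]
      simp
    simp only [this, lintegral_zero]
    exact zero_le
  · have heq : (fun x => Kf (x, y) * ENNReal.ofReal (Real.sqrt y / Real.sqrt x))
        = Set.indicator (Set.Ici y)
          (fun x => ENNReal.ofReal (Real.sqrt y / (π * Real.sqrt x * (x + y)))) := by
      funext x
      by_cases hx : y ≤ x
      · rw [Set.indicator_of_mem (show x ∈ Set.Ici y from hx) _, Kf, if_pos ⟨hpos.le, hx⟩]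
        have hxy : (0:ℝ) < x + y := by linarith
        rw [← ENNReal.ofReal_mul (by positivity)]
        congr 1
        field_simp
      · rw [Set.indicator_of_notMem (show x ∉ Set.Ici y from hx) _, Kf, if_neg (by push_neg; intro _; linarith [lt_of_not_ge hx])]
        simp
    rw [heq, lintegral_indicator measurableSet_Ici _,
      Measure.restrict_congr_set Ioi_ae_eq_Ici.symm, lint_Ioi hpos, half_eq]

lemma inner_y_le {x : ℝ} (hx : x ≠ 0) :
    ∫⁻ y, Kf (x, y) * ENNReal.ofReal (Real.sqrt x / Real.sqrt y) ≤ 2⁻¹ := by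
  rcases lt_or_gt_of_ne hx with hneg | hpos
  · have : ∀ y : ℝ, Kf (x, y) * ENNReal.ofReal (Real.sqrt x / Real.sqrt y) = 0 := by
      intro y
      rw [Kf, if_neg (by push_neg; intro h; linarith)]
      simp
    simp only [this, lintegral_zero]
    exact zero_le
  · have heq : (fun y => Kf (x, y) * ENNReal.ofReal (Real.sqrt x / Real.sqrt y))
        = Set.indicator (Set.Icc 0 x)
          (fun y => ENNReal.ofReal (Real.sqrt x / (π * Real.sqrt y * (y + x)))) := by
      funext y
      by_cases hy : 0 ≤ y ∧ y ≤ x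
      · rw [Set.indicator_of_mem (show y ∈ Set.Icc 0 x from hy) _, Kf, if_pos hy]
        have hxy : (0:ℝ) < x + y := by linarith [hy.1]
        rw [← ENNReal.ofReal_mul (by positivity)]
        congr 1
        rw [add_comm y x, div_mul_div_comm, one_mul]
        ring
      · rw [Set.indicator_of_notMem (show y ∉ Set.Icc 0 x from hy) _, Kf, if_neg hy]
        simp
    rw [heq, lintegral_indicator measurableSet_Icc _,
      Measure.restrict_congr_set Ioc_ae_eq_Icc.symm, lint_Ioc hpos, half_eq]

lemma norm_eq (u v : ℝ → ℂ) (p : ℝ × ℝ) :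
    (‖if 0 ≤ p.2 ∧ p.2 ≤ p.1 then
        u p.2 * (starRingEnd ℂ) (v p.1) / ((Real.pi : ℂ) * ((p.1 + p.2 : ℝ) : ℂ))
      else 0‖₊ : ℝ≥0∞)
    = Kf p * ((‖u p.2‖₊ : ℝ≥0∞) * (‖v p.1‖₊ : ℝ≥0∞)) := by
  obtain ⟨x, y⟩ := p
  by_cases h : 0 ≤ y ∧ y ≤ x
  · simp only [if_pos h, Kf]
    rw [← enorm_eq_nnnorm, ← ofReal_norm, ← enorm_eq_nnnorm, ← ofReal_norm, ← enorm_eq_nnnorm, ← ofReal_norm]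
    have hxy : (0:ℝ) ≤ x + y := by
      obtain ⟨h1, h2⟩ := h; linarith
    have hn : ‖u y * (starRingEnd ℂ) (v x) / ((Real.pi : ℂ) * ((x + y : ℝ) : ℂ))‖
        = 1 / (π * (x + y)) * (‖u y‖ * ‖v x‖) := by
      rw [norm_div, norm_mul, norm_mul, RCLike.norm_conj, Complex.norm_real,
        Complex.norm_real, Real.norm_eq_abs, Real.norm_eq_abs, abs_of_nonneg Real.pi_pos.le,
        abs_of_nonneg hxy]
      ring
    rw [hn, ENNReal.ofReal_mul (by positivity), ENNReal.ofReal_mul (by positivity)]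
  · simp [if_neg h, Kf, h]

lemma ae_ne_zero : ∀ᵐ t : ℝ, t ≠ 0 := by
  refine ae_iff.2 ?_
  have : {t : ℝ | ¬ t ≠ 0} = {0} := by ext t; simp
  rw [this]
  exact Real.volume_singleton

lemma lint_U (u : ℝ → ℂ) (hu : AEStronglyMeasurable u volume) :
    ∫⁻ p : ℝ × ℝ, Kf p * ENNReal.ofReal (Real.sqrt p.2 / Real.sqrt p.1) * (‖u p.2‖₊ : ℝ≥0∞) ^ 2
      ≤ 2⁻¹ * ∫⁻ t, (‖u t‖₊ : ℝ≥0∞) ^ 2 := by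
  rw [Measure.volume_eq_prod]
  have hm : AEMeasurable (fun p : ℝ × ℝ =>
      Kf p * ENNReal.ofReal (Real.sqrt p.2 / Real.sqrt p.1) * (‖u p.2‖₊ : ℝ≥0∞) ^ 2)
      ((volume : Measure ℝ).prod volume) := by
    refine AEMeasurable.mul (AEMeasurable.mul Kf_meas.aemeasurable ?_) ?_
    · exact (ENNReal.measurable_ofReal.comp
        ((Real.continuous_sqrt.measurable.comp measurable_snd).div
          (Real.continuous_sqrt.measurable.comp measurable_fst))).aemeasurable
    · exact (hu.enorm.comp_quasiMeasurePreserving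
        Measure.quasiMeasurePreserving_snd).pow_const 2
  rw [lintegral_prod_symm _ hm]
  refine le_trans (lintegral_mono_ae ?_)
    (le_of_eq (lintegral_const_mul' _ _ (ENNReal.inv_ne_top.2 two_ne_zero)))
  filter_upwards [ae_ne_zero] with y hy
  show (∫⁻ x, Kf (x, y) * ENNReal.ofReal (Real.sqrt y / Real.sqrt x)
      * (‖u y‖₊ : ℝ≥0∞) ^ 2) ≤ 2⁻¹ * (‖u y‖₊ : ℝ≥0∞) ^ 2
  rw [lintegral_mul_const' _ _ (ENNReal.pow_ne_top ENNReal.coe_ne_top)]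
  exact mul_le_mul_left (inner_x_le hy) _

lemma lint_V (v : ℝ → ℂ) (hv : AEStronglyMeasurable v volume) :
    ∫⁻ p : ℝ × ℝ, Kf p * ENNReal.ofReal (Real.sqrt p.1 / Real.sqrt p.2) * (‖v p.1‖₊ : ℝ≥0∞) ^ 2
      ≤ 2⁻¹ * ∫⁻ t, (‖v t‖₊ : ℝ≥0∞) ^ 2 := by
  rw [Measure.volume_eq_prod]
  have hm : AEMeasurable (fun p : ℝ × ℝ =>
      Kf p * ENNReal.ofReal (Real.sqrt p.1 / Real.sqrt p.2) * (‖v p.1‖₊ : ℝ≥0∞) ^ 2)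
      ((volume : Measure ℝ).prod volume) := by
    refine AEMeasurable.mul (AEMeasurable.mul Kf_meas.aemeasurable ?_) ?_
    · exact (ENNReal.measurable_ofReal.comp
        ((Real.continuous_sqrt.measurable.comp measurable_fst).div
          (Real.continuous_sqrt.measurable.comp measurable_snd))).aemeasurable
    · exact (hv.enorm.comp_quasiMeasurePreserving
        Measure.quasiMeasurePreserving_fst).pow_const 2
  rw [lintegral_prod _ hm]
  refine le_trans (lintegral_mono_ae ?_)
    (le_of_eq (lintegral_const_mul' _ _ (ENNReal.inv_ne_top.2 two_ne_zero)))
  filter_upwards [ae_ne_zero] with x hx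
  show (∫⁻ y, Kf (x, y) * ENNReal.ofReal (Real.sqrt x / Real.sqrt y)
      * (‖v x‖₊ : ℝ≥0∞) ^ 2) ≤ 2⁻¹ * (‖v x‖₊ : ℝ≥0∞) ^ 2
  rw [lintegral_mul_const' _ _ (ENNReal.pow_ne_top ENNReal.coe_ne_top)]
  exact mul_le_mul_left (inner_y_le hx) _

lemma sq_eLpNorm (u : ℝ → ℂ) :
    (eLpNorm u 2 volume) ^ 2 = ∫⁻ t, (‖u t‖₊ : ℝ≥0∞) ^ 2 := by
  rw [eLpNorm_eq_lintegral_rpow_enorm_toReal two_ne_zero ENNReal.ofNat_ne_top]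
  rw [← ENNReal.rpow_natCast _ 2, ← ENNReal.rpow_mul]
  norm_num
  rfl

lemma ae_snd_ne_zero : ∀ᵐ p : ℝ × ℝ, p.2 ≠ 0 := by
  rw [Measure.volume_eq_prod]
  refine ae_iff.2 (Measure.quasiMeasurePreserving_snd.preimage_null
    (s := {t : ℝ | ¬ t ≠ 0}) ?_)
  exact ae_iff.1 ae_ne_zero

lemma lint_zero_u (u v : ℝ → ℂ) (hu0 : u =ᵐ[volume] 0) :
    ∫⁻ p : ℝ × ℝ, Kf p * ((‖u p.2‖₊ : ℝ≥0∞) * (‖v p.1‖₊ : ℝ≥0∞)) = 0 := by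
  have hae : ∀ᵐ p : ℝ × ℝ, u p.2 = 0 := by
    rw [Measure.volume_eq_prod]
    refine ae_iff.2 (Measure.quasiMeasurePreserving_snd.preimage_null
      (s := {t : ℝ | ¬ u t = 0}) ?_)
    exact ae_iff.1 (hu0.mono fun t ht => by simpa using ht)
  have : ∀ᵐ p : ℝ × ℝ, Kf p * ((‖u p.2‖₊ : ℝ≥0∞) * (‖v p.1‖₊ : ℝ≥0∞)) = 0 := by
    filter_upwards [hae] with p hp
    rw [hp]
    simp
  rw [lintegral_congr_ae this, lintegral_zero]

lemma lint_zero_v (u v : ℝ → ℂ) (hv0 : v =ᵐ[volume] 0) :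
    ∫⁻ p : ℝ × ℝ, Kf p * ((‖u p.2‖₊ : ℝ≥0∞) * (‖v p.1‖₊ : ℝ≥0∞)) = 0 := by
  have hae : ∀ᵐ p : ℝ × ℝ, v p.1 = 0 := by
    rw [Measure.volume_eq_prod]
    refine ae_iff.2 (Measure.quasiMeasurePreserving_fst.preimage_null
      (s := {t : ℝ | ¬ v t = 0}) ?_)
    exact ae_iff.1 (hv0.mono fun t ht => by simpa using ht)
  have : ∀ᵐ p : ℝ × ℝ, Kf p * ((‖u p.2‖₊ : ℝ≥0∞) * (‖v p.1‖₊ : ℝ≥0∞)) = 0 := by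
    filter_upwards [hae] with p hp
    rw [hp]
    simp
  rw [lintegral_congr_ae this, lintegral_zero]

lemma pointwise_bound {L : ℝ≥0∞} (hL0 : L ≠ 0) (hLt : L ≠ ⊤) (u v : ℝ → ℂ) :
    ∀ᵐ p : ℝ × ℝ, Kf p * ((‖u p.2‖₊ : ℝ≥0∞) * (‖v p.1‖₊ : ℝ≥0∞)) ≤
      (L * (Kf p * ENNReal.ofReal (Real.sqrt p.2 / Real.sqrt p.1) * (‖u p.2‖₊ : ℝ≥0∞) ^ 2)
        + L⁻¹ * (Kf p * ENNReal.ofReal (Real.sqrt p.1 / Real.sqrt p.2)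
          * (‖v p.1‖₊ : ℝ≥0∞) ^ 2)) / 2 := by
  filter_upwards [ae_snd_ne_zero] with p hy2
  obtain ⟨x, y⟩ := p
  by_cases h : 0 ≤ y ∧ y ≤ x
  · have hy : 0 < y := lt_of_le_of_ne h.1 (Ne.symm hy2)
    have hx : 0 < x := lt_of_lt_of_le hy h.2
    set r := ENNReal.ofReal (Real.sqrt y / Real.sqrt x) with hr
    have hr0 : r ≠ 0 := (ENNReal.ofReal_pos.2 (by positivity)).ne'
    have hrt : r ≠ ⊤ := ENNReal.ofReal_ne_top
    have ht0 : L * r ≠ 0 := mul_ne_zero hL0 hr0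
    have htt : L * r ≠ ⊤ := ENNReal.mul_ne_top hLt hrt
    have key := ennreal_amgm' ht0 htt (‖u y‖₊ : ℝ≥0∞) (‖v x‖₊ : ℝ≥0∞)
    have hinv : (L * r)⁻¹ = L⁻¹ * ENNReal.ofReal (Real.sqrt x / Real.sqrt y) := by
      rw [ENNReal.mul_inv (Or.inl hL0) (Or.inl hLt)]
      congr 1
      rw [hr, ← ENNReal.ofReal_inv_of_pos (by positivity), inv_div]
    calc Kf (x, y) * ((‖u y‖₊ : ℝ≥0∞) * (‖v x‖₊ : ℝ≥0∞))
        ≤ Kf (x, y) * ((L * r * (‖u y‖₊ : ℝ≥0∞) ^ 2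
            + (L * r)⁻¹ * (‖v x‖₊ : ℝ≥0∞) ^ 2) / 2) := mul_le_mul_right key _
      _ = (L * (Kf (x, y) * r * (‖u y‖₊ : ℝ≥0∞) ^ 2)
            + L⁻¹ * (Kf (x, y) * ENNReal.ofReal (Real.sqrt x / Real.sqrt y)
              * (‖v x‖₊ : ℝ≥0∞) ^ 2)) / 2 := by
          rw [hinv, div_eq_mul_inv, div_eq_mul_inv]
          rw [div_eq_mul_inv]
          ring
  · have hK : Kf (x, y) = 0 := if_neg h
    rw [hK]
    simp only [zero_mul, zero_le]

lemma meas_U (u : ℝ → ℂ) (hu : AEStronglyMeasurable u volume) :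
    AEMeasurable (fun p : ℝ × ℝ =>
      Kf p * ENNReal.ofReal (Real.sqrt p.2 / Real.sqrt p.1) * (‖u p.2‖₊ : ℝ≥0∞) ^ 2) volume := by
  rw [Measure.volume_eq_prod]
  refine AEMeasurable.mul (AEMeasurable.mul Kf_meas.aemeasurable ?_) ?_
  · exact (ENNReal.measurable_ofReal.comp
      ((Real.continuous_sqrt.measurable.comp measurable_snd).div
        (Real.continuous_sqrt.measurable.comp measurable_fst))).aemeasurable
  · exact (hu.enorm.comp_quasiMeasurePreserving
      Measure.quasiMeasurePreserving_snd).pow_const 2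

lemma meas_V (v : ℝ → ℂ) (hv : AEStronglyMeasurable v volume) :
    AEMeasurable (fun p : ℝ × ℝ =>
      Kf p * ENNReal.ofReal (Real.sqrt p.1 / Real.sqrt p.2) * (‖v p.1‖₊ : ℝ≥0∞) ^ 2) volume := by
  rw [Measure.volume_eq_prod]
  refine AEMeasurable.mul (AEMeasurable.mul Kf_meas.aemeasurable ?_) ?_
  · exact (ENNReal.measurable_ofReal.comp
      ((Real.continuous_sqrt.measurable.comp measurable_fst).div
        (Real.continuous_sqrt.measurable.comp measurable_snd))).aemeasurable
  · exact (hv.enorm.comp_quasiMeasurePreserving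
      Measure.quasiMeasurePreserving_fst).pow_const 2

/-- The modified Hardy operator, with kernel `H(x-y) H(x) H(y) / (π (x+y))`, is bounded on
`L²(ℝ)` with norm at most `1/2`: for all `u, v ∈ L²(ℝ)`,
`|∬_{0 ≤ y ≤ x} u(y) conj(v(x)) / (π (x+y)) dy dx| ≤ (1/2) ‖u‖_{L²} ‖v‖_{L²}`. -/
theorem modified_hardy_bound (u v : ℝ → ℂ)
    (hu : MemLp u 2 volume) (hv : MemLp v 2 volume) :
    ENNReal.ofReal
        ‖∫ p : ℝ × ℝ,
            (if 0 ≤ p.2 ∧ p.2 ≤ p.1 then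
              u p.2 * (starRingEnd ℂ) (v p.1) / ((Real.pi : ℂ) * ((p.1 + p.2 : ℝ) : ℂ))
            else 0)‖
      ≤ 2⁻¹ * eLpNorm u 2 volume * eLpNorm v 2 volume := by
  have hNut : eLpNorm u 2 volume ≠ ⊤ := hu.2.ne
  have hNvt : eLpNorm v 2 volume ≠ ⊤ := hv.2.ne
  have stepA : ENNReal.ofReal
      ‖∫ p : ℝ × ℝ,
          (if 0 ≤ p.2 ∧ p.2 ≤ p.1 then
            u p.2 * (starRingEnd ℂ) (v p.1) / ((Real.pi : ℂ) * ((p.1 + p.2 : ℝ) : ℂ))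
          else 0)‖
      ≤ ∫⁻ p : ℝ × ℝ, Kf p * ((‖u p.2‖₊ : ℝ≥0∞) * (‖v p.1‖₊ : ℝ≥0∞)) := by
    rw [ofReal_norm]
    refine le_trans (enorm_integral_le_lintegral_enorm _)
      (le_of_eq (lintegral_congr fun p => norm_eq u v p))
  by_cases hNu0 : eLpNorm u 2 volume = 0
  · have hu0 : u =ᵐ[volume] 0 := (eLpNorm_eq_zero_iff hu.1 two_ne_zero).1 hNu0
    refine le_trans stepA ?_
    rw [lint_zero_u u v hu0]
    exact zero_le
  by_cases hNv0 : eLpNorm v 2 volume = 0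
  · have hv0 : v =ᵐ[volume] 0 := (eLpNorm_eq_zero_iff hv.1 two_ne_zero).1 hNv0
    refine le_trans stepA ?_
    rw [lint_zero_v u v hv0]
    exact zero_le
  set Nu := eLpNorm u 2 volume with hNu
  set Nv := eLpNorm v 2 volume with hNv
  set L := Nv / Nu with hLdef
  have hL0 : L ≠ 0 := ENNReal.div_ne_zero.2 ⟨hNv0, hNut⟩
  have hLt : L ≠ ⊤ := (ENNReal.div_lt_top hNvt hNu0).ne
  refine le_trans stepA ?_
  calc ∫⁻ p : ℝ × ℝ, Kf p * ((‖u p.2‖₊ : ℝ≥0∞) * (‖v p.1‖₊ : ℝ≥0∞))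
      ≤ ∫⁻ p : ℝ × ℝ,
          (L * (Kf p * ENNReal.ofReal (Real.sqrt p.2 / Real.sqrt p.1) * (‖u p.2‖₊ : ℝ≥0∞) ^ 2)
            + L⁻¹ * (Kf p * ENNReal.ofReal (Real.sqrt p.1 / Real.sqrt p.2)
              * (‖v p.1‖₊ : ℝ≥0∞) ^ 2)) / 2 :=
        lintegral_mono_ae (pointwise_bound hL0 hLt u v)
    _ = (∫⁻ p : ℝ × ℝ,
          L * (Kf p * ENNReal.ofReal (Real.sqrt p.2 / Real.sqrt p.1) * (‖u p.2‖₊ : ℝ≥0∞) ^ 2)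
            + L⁻¹ * (Kf p * ENNReal.ofReal (Real.sqrt p.1 / Real.sqrt p.2)
              * (‖v p.1‖₊ : ℝ≥0∞) ^ 2)) / 2 := by
        simp_rw [div_eq_mul_inv]
        rw [lintegral_mul_const' _ _ (ENNReal.inv_ne_top.2 two_ne_zero)]
    _ = (L * (∫⁻ p : ℝ × ℝ, Kf p * ENNReal.ofReal (Real.sqrt p.2 / Real.sqrt p.1)
            * (‖u p.2‖₊ : ℝ≥0∞) ^ 2)
          + L⁻¹ * (∫⁻ p : ℝ × ℝ, Kf p * ENNReal.ofReal (Real.sqrt p.1 / Real.sqrt p.2)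
            * (‖v p.1‖₊ : ℝ≥0∞) ^ 2)) / 2 := by
        rw [lintegral_add_left' ((meas_U u hu.1).const_mul L)]
        rw [lintegral_const_mul' L _ hLt,
          lintegral_const_mul' L⁻¹ _ (ENNReal.inv_ne_top.2 hL0)]
    _ ≤ (L * (2⁻¹ * ∫⁻ t, (‖u t‖₊ : ℝ≥0∞) ^ 2)
          + L⁻¹ * (2⁻¹ * ∫⁻ t, (‖v t‖₊ : ℝ≥0∞) ^ 2)) / 2 := by
        gcongr
        · exact lint_U u hu.1
        · exact lint_V v hv.1
    _ = 2⁻¹ * Nu * Nv := by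
        rw [← sq_eLpNorm u, ← sq_eLpNorm v, ← hNu, ← hNv]
        have e1 : L * Nu ^ 2 = Nv * Nu := by
          rw [pow_two, ← mul_assoc, hLdef, ENNReal.div_mul_cancel hNu0 hNut]
        have e2 : L⁻¹ * Nv ^ 2 = Nu * Nv := by
          rw [hLdef, ENNReal.inv_div (Or.inl hNut) (Or.inl hNu0), pow_two, ← mul_assoc,
            ENNReal.div_mul_cancel hNv0 hNvt]
        rw [mul_left_comm L, mul_left_comm L⁻¹, e1, e2, mul_comm Nv Nu, ← add_mul,
          ENNReal.inv_two_add_inv_two, one_mul, div_eq_mul_inv, mul_comm, ← mul_assoc]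
end

section
/- Let a₁, …, aₙ be positive and pairwise distinct real numbers. Then the integral K₀(a) = ∫_{{t ∈ ℝ₊ⁿ : Σⱼ tⱼ/aⱼ ≥ 1}} e^{−(t₁+⋯+tₙ)} dt equals Σ_{j=1}^{n} e^{−aⱼ} · (∏_{k≠j} aₖ) / (∏_{k≠j} (aₖ − aⱼ)). -/
open MeasureTheory Real Set Finset


lemma pf_identity {n : ℕ} [NeZero n] (a : Fin n → ℝ) (hinj : Function.Injective a) :
    ∑ j, (∏ k ∈ Finset.univ.erase j, (a k / (a k - a j))) = 1 := by
  have hs : (Finset.univ : Finset (Fin n)).Nonempty := Finset.univ_nonempty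
  have h := Lagrange.sum_basis (v := a) hinj.injOn hs
  have h0 := congrArg (Polynomial.eval 0) h
  rw [Polynomial.eval_finset_sum] at h0
  simp only [Polynomial.eval_one] at h0
  rw [← h0]
  refine Finset.sum_congr rfl fun j _ => ?_
  rw [Lagrange.basis, Polynomial.eval_prod]
  refine Finset.prod_congr rfl fun k hk => ?_
  have hkj : a k ≠ a j := fun h => (Finset.mem_erase.1 hk).1 (hinj h)
  rw [Lagrange.basisDivisor]
  simp only [Polynomial.eval_mul, Polynomial.eval_C, Polynomial.eval_sub, Polynomial.eval_X]
  rw [zero_sub]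
  have h1 : a j - a k ≠ 0 := sub_ne_zero.2 (Ne.symm hkj)
  have h2 : a k - a j ≠ 0 := sub_ne_zero.2 hkj
  field_simp
  ring


lemma exp_ind_integrable :
    Integrable (fun x : ℝ => Set.indicator (Set.Ici 0) (fun x => Real.exp (-x)) x) := by
  rw [integrable_indicator_iff measurableSet_Ici, integrableOn_Ici_iff_integrableOn_Ioi]
  simpa using exp_neg_integrableOn_Ioi 0 one_pos

lemma exp_ind_integral :
    ∫ x : ℝ, Set.indicator (Set.Ici 0) (fun x => Real.exp (-x)) x = 1 := by
  rw [integral_indicator measurableSet_Ici, integral_Ici_eq_integral_Ioi,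
    integral_exp_neg_Ioi_zero]

lemma meas_nonneg_set (m : ℕ) : MeasurableSet {t : Fin m → ℝ | ∀ j, 0 ≤ t j} := by
  have : {t : Fin m → ℝ | ∀ j, 0 ≤ t j} = ⋂ j, {t | 0 ≤ t j} := by
    ext t; simp [Set.mem_iInter]
  rw [this]
  exact MeasurableSet.iInter fun j => measurableSet_le measurable_const (measurable_pi_apply j)

lemma meas_S (m : ℕ) (a : Fin m → ℝ) (c : ℝ) :
    MeasurableSet {t : Fin m → ℝ | (∀ j, 0 ≤ t j) ∧ c ≤ ∑ j, t j / a j} := by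
  have : {t : Fin m → ℝ | (∀ j, 0 ≤ t j) ∧ c ≤ ∑ j, t j / a j}
      = {t : Fin m → ℝ | ∀ j, 0 ≤ t j} ∩ {t | c ≤ ∑ j, t j / a j} := rfl
  rw [this]
  exact (meas_nonneg_set m).inter
    (measurableSet_le measurable_const (by fun_prop))

lemma indicator_eq_prod (m : ℕ) (t : Fin m → ℝ) :
    Set.indicator {t : Fin m → ℝ | ∀ j, 0 ≤ t j} (fun t => Real.exp (-(∑ j, t j))) t
      = ∏ j, Set.indicator (Set.Ici 0) (fun x => Real.exp (-x)) (t j) := by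
  by_cases h : ∀ j, 0 ≤ t j
  · rw [Set.indicator_of_mem (show t ∈ {t : Fin m → ℝ | ∀ j, 0 ≤ t j} from h),
      ← Finset.sum_neg_distrib, Real.exp_sum]
    exact Finset.prod_congr rfl fun j _ =>
      (Set.indicator_of_mem (show t j ∈ Set.Ici (0:ℝ) from h j) fun x => Real.exp (-x)).symm
  · rw [Set.indicator_of_notMem (show t ∉ {t : Fin m → ℝ | ∀ j, 0 ≤ t j} from h)]
    push_neg at h
    obtain ⟨j, hj⟩ := h
    symm
    apply Finset.prod_eq_zero (Finset.mem_univ j)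
    rw [Set.indicator_of_notMem (by simpa using hj)]

lemma integral_full (m : ℕ) :
    ∫ t in {t : Fin m → ℝ | ∀ j, 0 ≤ t j}, Real.exp (-(∑ j, t j)) = 1 := by
  rw [← integral_indicator (meas_nonneg_set m)]
  simp_rw [indicator_eq_prod]
  rw [volume_pi, MeasureTheory.integral_fintype_prod_eq_prod (f := fun (_ : Fin m) x =>
    Set.indicator (Set.Ici 0) (fun x => Real.exp (-x)) x)]
  simp [exp_ind_integral]

lemma integrable_S (m : ℕ) (a : Fin m → ℝ) (c : ℝ) :
    Integrable (Set.indicator {t : Fin m → ℝ | (∀ j, 0 ≤ t j) ∧ c ≤ ∑ j, t j / a j}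
      (fun t => Real.exp (-(∑ j, t j)))) := by
  have hg : Integrable (fun t : Fin m → ℝ =>
      ∏ j, Set.indicator (Set.Ici 0) (fun x => Real.exp (-x)) (t j)) :=
    Integrable.fintype_prod fun _ => exp_ind_integrable
  refine hg.mono' ?_ ?_
  · exact ((Continuous.measurable (by fun_prop)).indicator (meas_S m a c)).aestronglyMeasurable
  · filter_upwards with t
    by_cases ht : t ∈ {t : Fin m → ℝ | (∀ j, 0 ≤ t j) ∧ c ≤ ∑ j, t j / a j}
    · rw [Set.indicator_of_mem ht, ← indicator_eq_prod, Set.indicator_of_mem (show t ∈ {t : Fin m → ℝ | ∀ j, 0 ≤ t j} from ht.1),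
        Real.norm_eq_abs, abs_of_pos (Real.exp_pos _)]
    · rw [Set.indicator_of_notMem ht, norm_zero]
      exact Finset.prod_nonneg fun j _ => Set.indicator_nonneg (fun x _ => (Real.exp_pos _).le) _


lemma castSucc_ne_last' {n : ℕ} (x : Fin n) : Fin.castSuccEmb x ≠ Fin.last n :=
  (Fin.castSucc_lt_last x).ne

lemma prod_erase_last {n : ℕ} (F : Fin (n+1) → ℝ) :
    ∏ k ∈ Finset.univ.erase (Fin.last n), F k = ∏ k : Fin n, F (Fin.castSucc k) := by
  rw [Fin.univ_castSuccEmb, Finset.cons_eq_insert,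
    Finset.erase_insert (by simpa using fun x => castSucc_ne_last' x), Finset.prod_map]
  rfl

lemma prod_erase_castSucc {n : ℕ} (F : Fin (n+1) → ℝ) (j : Fin n) :
    ∏ k ∈ Finset.univ.erase (Fin.castSucc j), F k
      = F (Fin.last n) * ∏ k ∈ Finset.univ.erase j, F (Fin.castSucc k) := by
  rw [Fin.univ_castSuccEmb, Finset.cons_eq_insert,
    Finset.erase_insert_of_ne (Fin.ne_of_lt (Fin.castSucc_lt_last j)).symm,
    Finset.prod_insert (by simp only [Finset.mem_erase, Finset.mem_map]; rintro ⟨-, x, -, hx⟩; exact castSucc_ne_last' x hx),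
    show j.castSucc = Fin.castSuccEmb j from rfl, ← Finset.map_erase, Finset.prod_map]
  rfl

lemma my_integral_exp_mul (k A : ℝ) (hk : k ≠ 0) :
    ∫ x in (0:ℝ)..A, Real.exp (k * x) = (Real.exp (k * A) - 1) / k := by
  have h : ∀ x ∈ Set.uIcc (0:ℝ) A,
      HasDerivAt (fun x => Real.exp (k * x) / k) (Real.exp (k * x)) x := by
    intro x _
    have := (((hasDerivAt_id x).const_mul k).exp).div_const k
    simpa [mul_comm, mul_div_assoc, mul_div_cancel_left₀ _ hk] using this
  rw [intervalIntegral.integral_eq_sub_of_hasDerivAt h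
    (by apply Continuous.intervalIntegrable; fun_prop)]
  simp [sub_div]

lemma integral_exp_neg_Ici (A : ℝ) : ∫ x in Set.Ici A, Real.exp (-x) = Real.exp (-A) := by
  rw [integral_Ici_eq_integral_Ioi, integral_exp_neg_Ioi]


lemma K0_aux (n : ℕ) : ∀ (a : Fin n → ℝ), (∀ j, 0 < a j) → Function.Injective a →
    ∀ c : ℝ, 0 < c →
    (∫ t in {t : Fin n → ℝ | (∀ j, 0 ≤ t j) ∧ c ≤ ∑ j, t j / a j}, Real.exp (-(∑ j, t j)))
      = ∑ j, Real.exp (-(c * a j)) * ∏ k ∈ Finset.univ.erase j, (a k / (a k - a j)) := by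
  induction n with
  | zero =>
    intro a _ _ c hc
    have he : {t : Fin 0 → ℝ | (∀ j, 0 ≤ t j) ∧ c ≤ ∑ j, t j / a j} = ∅ := by
      ext t
      simp [hc.not_ge]
    rw [he]
    simp
  | succ n ih =>
    intro a hpos hinj c hc
    set b : Fin n → ℝ := fun j => a (Fin.castSucc j) with hb
    have hbpos : ∀ j, 0 < b j := fun j => hpos _
    have hbinj : Function.Injective b := fun i j h => Fin.castSucc_injective n (hinj h)
    have haL : 0 < a (Fin.last n) := hpos _
    have hbneL : ∀ j, b j ≠ a (Fin.last n) :=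
      fun j h => (Fin.castSucc_lt_last j).ne (by exact hinj h)
    set A : ℝ := c * a (Fin.last n) with hA
    have hApos : 0 < A := mul_pos hc haL
    set C : Fin n → ℝ := fun j => ∏ k ∈ Finset.univ.erase j, (b k / (b k - b j)) with hC
    -- Step 1: to product space
    have step1 :
        (∫ t in {t : Fin (n+1) → ℝ | (∀ j, 0 ≤ t j) ∧ c ≤ ∑ j, t j / a j},
          Real.exp (-(∑ j, t j)))
        = ∫ x : ℝ, (Set.indicator (Set.Ici 0) (fun x => Real.exp (-x)) x) *
            (∫ u in {u : Fin n → ℝ | (∀ j, 0 ≤ u j) ∧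
                c - x / a (Fin.last n) ≤ ∑ j, u j / b j}, Real.exp (-(∑ j, u j))) := by
      rw [← integral_indicator (meas_S _ a c)]
      have mp := (measurePreserving_piFinSuccAbove (fun _ : Fin (n+1) => (volume : Measure ℝ))
        (Fin.last n)).symm
      rw [volume_pi, ← mp.integral_comp']
      have key : ∀ (p : ℝ × (Fin n → ℝ)),
          Set.indicator {t : Fin (n+1) → ℝ | (∀ j, 0 ≤ t j) ∧ c ≤ ∑ j, t j / a j}
            (fun t => Real.exp (-(∑ j, t j)))
            ((MeasurableEquiv.piFinSuccAbove (fun _ => ℝ) (Fin.last n)).symm p)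
          = (Set.indicator (Set.Ici 0) (fun x => Real.exp (-x)) p.1) *
            (Set.indicator {u : Fin n → ℝ | (∀ j, 0 ≤ u j) ∧
              c - p.1 / a (Fin.last n) ≤ ∑ j, u j / b j}
              (fun u => Real.exp (-(∑ j, u j))) p.2) := by
        rintro ⟨x, u⟩
        have hteq : ((MeasurableEquiv.piFinSuccAbove (fun _ => ℝ) (Fin.last n)).symm (x, u))
            = (Fin.last n).insertNth x u := by
          simp [MeasurableEquiv.piFinSuccAbove, Fin.insertNthEquiv]
        rw [hteq]
        have hsum : ∑ j, (Fin.insertNth (α := fun _ => ℝ) (Fin.last n) x u) j = x + ∑ j, u j := by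
          rw [Fin.sum_univ_succAbove _ (Fin.last n)]
          simp
        have hsum2 : ∑ j, (Fin.insertNth (α := fun _ => ℝ) (Fin.last n) x u) j / a j
            = x / a (Fin.last n) + ∑ j, u j / b j := by
          rw [Fin.sum_univ_succAbove (fun j => (Fin.insertNth (α := fun _ => ℝ) (Fin.last n) x u) j / a j) (Fin.last n)]
          simp [hb]
        have hmem : ((Fin.last n).insertNth x u ∈
              {t : Fin (n+1) → ℝ | (∀ j, 0 ≤ t j) ∧ c ≤ ∑ j, t j / a j})
            ↔ (x ∈ Set.Ici (0:ℝ)) ∧ (u ∈ {u : Fin n → ℝ | (∀ j, 0 ≤ u j) ∧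
              c - x / a (Fin.last n) ≤ ∑ j, u j / b j}) := by
          simp only [Set.mem_setOf_eq, Set.mem_Ici, hsum2, Fin.forall_iff_succAbove (Fin.last n),
            Fin.insertNth_apply_same, Fin.insertNth_apply_succAbove]
          constructor
          · rintro ⟨⟨h1, h2⟩, h3⟩
            exact ⟨h1, h2, by linarith⟩
          · rintro ⟨h1, h2, h3⟩
            exact ⟨⟨h1, h2⟩, by linarith⟩
        by_cases h : (Fin.last n).insertNth x u ∈
            {t : Fin (n+1) → ℝ | (∀ j, 0 ≤ t j) ∧ c ≤ ∑ j, t j / a j}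
        · rw [Set.indicator_of_mem h, Set.indicator_of_mem (hmem.1 h).1,
            Set.indicator_of_mem (hmem.1 h).2, hsum, neg_add, Real.exp_add]
        · rw [Set.indicator_of_notMem h]
          rcases not_and_or.1 (fun hh => h (hmem.2 hh)) with h' | h'
          · rw [Set.indicator_of_notMem h', zero_mul]
          · rw [Set.indicator_of_notMem h', mul_zero]
      have hInt : Integrable (fun p : ℝ × (Fin n → ℝ) =>
          Set.indicator {t : Fin (n+1) → ℝ | (∀ j, 0 ≤ t j) ∧ c ≤ ∑ j, t j / a j}
            (fun t => Real.exp (-(∑ j, t j)))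
            ((MeasurableEquiv.piFinSuccAbove (fun _ => ℝ) (Fin.last n)).symm p))
          ((volume : Measure ℝ).prod (Measure.pi fun _ => volume)) := by
        have h0 := integrable_S (n+1) a c
        rw [show (volume : Measure (Fin (n+1) → ℝ)) = Measure.pi fun _ => volume
          from volume_pi] at h0
        exact (mp.integrable_comp_emb (MeasurableEquiv.measurableEmbedding _)).2 h0
      rw [MeasureTheory.integral_prod _ hInt]
      refine integral_congr_ae (Filter.Eventually.of_forall fun x => ?_)
      simp_rw [key]
      rw [MeasureTheory.integral_const_mul]
      congr 1
      rw [integral_indicator (meas_S n b _), ← volume_pi]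

    -- Step 2: inner integral values
    have step2 : ∀ x : ℝ,
        (∫ u in {u : Fin n → ℝ | (∀ j, 0 ≤ u j) ∧
            c - x / a (Fin.last n) ≤ ∑ j, u j / b j}, Real.exp (-(∑ j, u j)))
        = if x < A then ∑ j, Real.exp (-((c - x / a (Fin.last n)) * b j)) * C j else 1 := by
      intro x
      by_cases hx : x < A
      · rw [if_pos hx]
        exact ih b hbpos hbinj _ (by rw [sub_pos, hA] at *; rw [div_lt_iff₀ haL] at *; linarith [hx])
      · rw [if_neg hx]
        have hset : {u : Fin n → ℝ | (∀ j, 0 ≤ u j) ∧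
            c - x / a (Fin.last n) ≤ ∑ j, u j / b j} = {u : Fin n → ℝ | ∀ j, 0 ≤ u j} := by
          ext u
          simp only [Set.mem_setOf_eq, and_iff_left_iff_imp]
          intro hu
          have h1 : c - x / a (Fin.last n) ≤ 0 := by
            rw [sub_nonpos, le_div_iff₀ haL]
            rw [hA] at hx
            linarith [not_lt.1 hx]
          exact h1.trans (Finset.sum_nonneg fun j _ => div_nonneg (hu j) (hbpos j).le)
        rw [hset, integral_full n]
    -- Step 3: outer integral
    have step3 :
        (∫ x : ℝ, (Set.indicator (Set.Ici 0) (fun x => Real.exp (-x)) x) *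
          (if x < A then ∑ j, Real.exp (-((c - x / a (Fin.last n)) * b j)) * C j else 1))
        = (∑ j, C j * Real.exp (-(c * b j)) *
            ((Real.exp ((b j / a (Fin.last n) - 1) * A) - 1) / (b j / a (Fin.last n) - 1)))
          + Real.exp (-A) := by
      set g : ℝ → ℝ := fun x => Real.exp (-x) *
        (if x < A then ∑ j, Real.exp (-((c - x / a (Fin.last n)) * b j)) * C j else 1) with hg
      have hLne : a (Fin.last n) ≠ 0 := haL.ne'
      have hmeq : (fun x : ℝ => (Set.indicator (Set.Ici 0) (fun x => Real.exp (-x)) x) *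
          (if x < A then ∑ j, Real.exp (-((c - x / a (Fin.last n)) * b j)) * C j else 1))
          = Set.indicator (Set.Ici 0) g := by
        funext x
        by_cases hx : x ∈ Set.Ici (0:ℝ)
        · rw [Set.indicator_of_mem hx, Set.indicator_of_mem hx]
        · rw [Set.indicator_of_notMem hx, Set.indicator_of_notMem hx, zero_mul]
      have hdisj : Disjoint (Set.Ioo (0:ℝ) A) (Set.Ici A) :=
        Set.disjoint_left.2 fun x hx hx' => absurd hx.2 (not_lt.2 hx')
      have heqOn1 : Set.EqOn (fun x => ∑ j, (C j * Real.exp (-(c * b j))) *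
          Real.exp ((b j / a (Fin.last n) - 1) * x)) g (Set.Ioo 0 A) := by
        intro x hx
        rw [hg]
        simp only [if_pos hx.2]
        rw [Finset.mul_sum]
        refine Finset.sum_congr rfl fun j _ => ?_
        have hrhs : Real.exp (-x) * (Real.exp (-((c - x / a (Fin.last n)) * b j)) * C j)
            = C j * Real.exp (-x + -((c - x / a (Fin.last n)) * b j)) := by
          rw [Real.exp_add]; ring
        rw [hrhs, mul_assoc, ← Real.exp_add]
        congr 2
        ring
      have heqOn2 : Set.EqOn (fun x => Real.exp (-x)) g (Set.Ici A) := by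
        intro x hx
        rw [hg]
        simp only [if_neg (not_lt.2 (Set.mem_Ici.1 hx)), mul_one]
      have hcont : Continuous (fun x => ∑ j, (C j * Real.exp (-(c * b j))) *
          Real.exp ((b j / a (Fin.last n) - 1) * x)) := by fun_prop
      have hcont' : ∀ j : Fin n, Continuous (fun x => (C j * Real.exp (-(c * b j))) *
          Real.exp ((b j / a (Fin.last n) - 1) * x)) := fun j => by fun_prop
      have hI1 : IntegrableOn g (Set.Ioo 0 A) :=
        IntegrableOn.congr_fun ((hcont.integrableOn_Icc (a := 0) (b := A)).mono_set
          Set.Ioo_subset_Icc_self) heqOn1 measurableSet_Ioo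
      have hI2 : IntegrableOn g (Set.Ici A) := by
        refine IntegrableOn.congr_fun ?_ heqOn2 measurableSet_Ici
        rw [integrableOn_Ici_iff_integrableOn_Ioi]
        simpa using exp_neg_integrableOn_Ioi A one_pos
      rw [hmeq, integral_indicator measurableSet_Ici, integral_Ici_eq_integral_Ioi,
        ← Set.Ioo_union_Ici_eq_Ioi hApos, setIntegral_union hdisj measurableSet_Ici hI1 hI2,
        ← setIntegral_congr_fun measurableSet_Ioo heqOn1,
        ← setIntegral_congr_fun measurableSet_Ici heqOn2, integral_exp_neg_Ici]
      congr 1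
      rw [integral_finset_sum _ (fun j _ => ((hcont' j).integrableOn_Icc (a := 0)
        (b := A)).mono_set Set.Ioo_subset_Icc_self)]
      refine Finset.sum_congr rfl fun j _ => ?_
      have hk : b j / a (Fin.last n) - 1 ≠ 0 :=
        sub_ne_zero.2 fun h => hbneL j ((div_eq_one_iff_eq hLne).1 h)
      rw [MeasureTheory.integral_const_mul, ← integral_Ioc_eq_integral_Ioo,
        ← intervalIntegral.integral_of_le hApos.le, my_integral_exp_mul _ _ hk]

    -- Step 4: algebra
    rw [step1]
    simp_rw [step2]
    rw [step3]
    rw [Fin.sum_univ_castSucc]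
    have hLne : a (Fin.last n) ≠ 0 := haL.ne'
    have hba : ∀ j : Fin n, a (Fin.castSucc j) = b j := fun _ => rfl
    have hDcs : ∀ j : Fin n, ∏ k ∈ Finset.univ.erase (Fin.castSucc j),
        (a k / (a k - a (Fin.castSucc j)))
        = (a (Fin.last n) / (a (Fin.last n) - b j)) * C j := by
      intro j
      rw [prod_erase_castSucc (fun k => a k / (a k - a (Fin.castSucc j))) j]
    have hid := pf_identity a hinj
    rw [Fin.sum_univ_castSucc, prod_erase_last (fun k => a k / (a k - a (Fin.last n)))] at hid
    simp_rw [hDcs, hba] at hid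
    rw [prod_erase_last (fun k => a k / (a k - a (Fin.last n)))]
    simp_rw [hDcs, hba]
    have hterm : ∀ j : Fin n,
        C j * Real.exp (-(c * b j)) *
          ((Real.exp ((b j / a (Fin.last n) - 1) * A) - 1) / (b j / a (Fin.last n) - 1))
        = Real.exp (-(c * b j)) * ((a (Fin.last n) / (a (Fin.last n) - b j)) * C j)
          - Real.exp (-A) * ((a (Fin.last n) / (a (Fin.last n) - b j)) * C j) := by
      intro j
      have hsub : a (Fin.last n) - b j ≠ 0 := sub_ne_zero.2 fun h => hbneL j h.symm
      have hk : b j / a (Fin.last n) - 1 ≠ 0 :=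
        sub_ne_zero.2 fun h => hbneL j ((div_eq_one_iff_eq hLne).1 h)
      have hkA : (b j / a (Fin.last n) - 1) * A = c * b j - c * a (Fin.last n) := by
        rw [hA]; field_simp
      rw [hkA, Real.exp_sub, hA, Real.exp_neg, Real.exp_neg]
      have hsub2 : b j - a (Fin.last n) ≠ 0 := sub_ne_zero.2 (hbneL j)
      have hE1 : Real.exp (c * b j) ≠ 0 := (Real.exp_pos _).ne'
      have hE2 : Real.exp (c * a (Fin.last n)) ≠ 0 := (Real.exp_pos _).ne'
      have hkk : b j / a (Fin.last n) - 1 = (b j - a (Fin.last n)) / a (Fin.last n) := by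
        field_simp
      rw [hkk]
      field_simp
      ring
    simp_rw [hterm]
    rw [Finset.sum_sub_distrib, ← Finset.mul_sum, hA]
    linear_combination -(Real.exp (-(c * a (Fin.last n)))) * hid


theorem K0_formula (n : ℕ) (a : Fin n → ℝ)
    (hpos : ∀ j, 0 < a j) (hinj : Function.Injective a) :
    (∫ t in {t : Fin n → ℝ | (∀ j, 0 ≤ t j) ∧ 1 ≤ ∑ j, t j / a j},
        Real.exp (-(∑ j, t j)))
      = ∑ j, Real.exp (-(a j)) *
          (∏ k ∈ Finset.univ.erase j, a k) / (∏ k ∈ Finset.univ.erase j, (a k - a j)) := by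
  have h := K0_aux n a hpos hinj 1 one_pos
  simp only [one_mul] at h
  rw [h]
  refine Finset.sum_congr rfl fun j _ => ?_
  rw [Finset.prod_div_distrib, mul_div_assoc]
end
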